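/- Let $H:\mathbb R^d\times\mathbb R^d\to\mathbb R$ and $f:\mathbb R^d\to\mathbb R$ be continuous and $\mathbb Z^d$-periodic in $y$, with $H\ge 0$, $H(0,y)=0$ for all $y$, $\max f=1$ and $\min f=-1$. Fix $\xi_1>0$, $\xi_2\in\mathbb R$, and suppose $v:\mathbb R^d\to\mathbb R$ is a $\mathbb Z^d$-periodic Lipschitz viscosity solution of $H(D_yv,y)\xi_1+f(y)\xi_2=\lambda$ in $\mathbb R^d$ for some constant $\lambda$. Then $\lambda=|\xi_2|$. -/

import Mathlib

open Real Set

/-- For `H ≥ 0` continuous, `ℤ^d`-periodic in `y`, with `H(0,y) = 0`,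
`f` continuous periodic with `max f = 1`, `min f = -1`, and `ξ1 > 0`: if a periodic
Lipschitz function `v` is a viscosity solution of `H(Dv,y)ξ1 + f(y)ξ2 = λ`, then
`λ = |ξ2|`. -/
theorem stmt_14 {d : ℕ} (ξ1 ξ2 lam : ℝ) (hξ1 : 0 < ξ1)
    (H : EuclideanSpace ℝ (Fin d) → EuclideanSpace ℝ (Fin d) → ℝ)
    (f : EuclideanSpace ℝ (Fin d) → ℝ)
    (hHcont : Continuous fun pr : EuclideanSpace ℝ (Fin d) × EuclideanSpace ℝ (Fin d) =>
      H pr.1 pr.2)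
    (hfcont : Continuous f)
    (hHper : ∀ p y (z : Fin d → ℤ),
      H p (y + (WithLp.equiv 2 (Fin d → ℝ)).symm fun i => (z i : ℝ)) = H p y)
    (hfper : ∀ y (z : Fin d → ℤ),
      f (y + (WithLp.equiv 2 (Fin d → ℝ)).symm fun i => (z i : ℝ)) = f y)
    (hHnonneg : ∀ p y, 0 ≤ H p y) (hH0 : ∀ y, H 0 y = 0)
    (hfmax : (∃ y, f y = 1) ∧ ∀ y, f y ≤ 1)
    (hfmin : (∃ y, f y = -1) ∧ ∀ y, -1 ≤ f y)
    (v : EuclideanSpace ℝ (Fin d) → ℝ)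
    (hvlip : ∃ K, LipschitzWith K v)
    (hvper : ∀ y (z : Fin d → ℤ),
      v (y + (WithLp.equiv 2 (Fin d → ℝ)).symm fun i => (z i : ℝ)) = v y)
    (hsub : ∀ φ : EuclideanSpace ℝ (Fin d) → ℝ, ContDiff ℝ 1 φ →
      ∀ y0, IsLocalMax (fun y => v y - φ y) y0 →
        H (gradient φ y0) y0 * ξ1 + f y0 * ξ2 ≤ lam)
    (hsuper : ∀ φ : EuclideanSpace ℝ (Fin d) → ℝ, ContDiff ℝ 1 φ →
      ∀ y0, IsLocalMin (fun y => v y - φ y) y0 →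
        lam ≤ H (gradient φ y0) y0 * ξ1 + f y0 * ξ2) :
    lam = |ξ2| := by
  obtain ⟨K, hK⟩ := hvlip
  -- Lower bound: for every point y*, f(y*) ξ2 ≤ lam
  have keyA : ∀ ystar : EuclideanSpace ℝ (Fin d), f ystar * ξ2 ≤ lam := by
    intro ystar
    refine le_of_forall_pos_le_add fun δ hδ => ?_
    have hc : ContinuousAt (fun y => f y * ξ2) ystar :=
      (hfcont.mul continuous_const).continuousAt
    rw [Metric.continuousAt_iff] at hc
    obtain ⟨η, hη, hball⟩ := hc δ hδ
    set ε : ℝ := η / (2 * (K + 1)) with hεdef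
    have hεpos : 0 < ε := by positivity
    have hεK : ε * K < η := by
      have hKnn : (0:ℝ) ≤ K := K.coe_nonneg
      rw [hεdef, div_mul_eq_mul_div, div_lt_iff₀ (by positivity)]
      nlinarith
    set φ : EuclideanSpace ℝ (Fin d) → ℝ := fun y => ‖y - ystar‖ ^ 2 / ε with hφdef
    have hφc : ContDiff ℝ 1 φ := by
      have : ContDiff ℝ 1 fun y : EuclideanSpace ℝ (Fin d) => ‖y - ystar‖ ^ 2 :=
        (contDiff_id.sub contDiff_const).norm_sq (𝕜 := ℝ)
      exact this.div_const ε
    set g : EuclideanSpace ℝ (Fin d) → ℝ := fun y => v y - φ y with hgdef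
    have hgc : Continuous g := hK.continuous.sub hφc.continuous
    set r : ℝ := ε * K + 1 with hrdef
    have hrpos : 0 < r := by positivity
    obtain ⟨yε, hyεB, hmax⟩ := (isCompact_closedBall ystar r).exists_isMaxOn
      ⟨ystar, Metric.mem_closedBall_self hrpos.le⟩ hgc.continuousOn
    have hstar : g ystar ≤ g yε := hmax (Metric.mem_closedBall_self hrpos.le)
    have hφstar : φ ystar = 0 := by simp [hφdef]
    set t : ℝ := ‖yε - ystar‖ with htdef
    have ht0 : 0 ≤ t := norm_nonneg _
    have hlips : v yε - v ystar ≤ K * t := by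
      have := hK.dist_le_mul yε ystar
      rw [dist_eq_norm] at this
      calc v yε - v ystar ≤ |v yε - v ystar| := le_abs_self _
        _ = dist (v yε) (v ystar) := (Real.dist_eq _ _).symm
        _ ≤ K * t := this
    have hsq : t ^ 2 ≤ ε * (K * t) := by
      have h2 : v ystar ≤ v yε - ‖yε - ystar‖ ^ 2 / ε := by
        have h3 := hstar
        simp only [hgdef] at h3
        rw [hφstar] at h3
        have h4 : φ yε = ‖yε - ystar‖ ^ 2 / ε := rfl
        rw [h4] at h3
        linarith
      rw [← htdef] at h2
      have : t ^ 2 / ε ≤ v yε - v ystar := by linarith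
      calc t ^ 2 = (t ^ 2 / ε) * ε := by field_simp
        _ ≤ (v yε - v ystar) * ε := by nlinarith
        _ ≤ (K * t) * ε := by nlinarith
        _ = ε * (K * t) := by ring
    have htle : t ≤ ε * K := by
      by_contra hcon
      push_neg at hcon
      have htpos : 0 < t := lt_of_le_of_lt (by positivity : (0:ℝ) ≤ ε * K) hcon
      nlinarith
    have hyball : yε ∈ Metric.ball ystar r := by
      rw [Metric.mem_ball, dist_eq_norm]
      calc ‖yε - ystar‖ = t := rfl
        _ ≤ ε * K := htle
        _ < r := by rw [hrdef]; linarith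
    have hloc : IsLocalMax (fun y => v y - φ y) yε := by
      have hmem : Metric.ball ystar r ∈ nhds yε := (Metric.isOpen_ball).mem_nhds hyball
      exact Filter.eventually_of_mem hmem fun y hy => hmax (Metric.ball_subset_closedBall hy)
    have hineq := hsub φ hφc yε hloc
    have hHpos : 0 ≤ H (gradient φ yε) yε * ξ1 :=
      mul_nonneg (hHnonneg _ _) hξ1.le
    have hfε : f yε * ξ2 ≤ lam := by linarith
    have hdist : dist yε ystar < η := by
      rw [dist_eq_norm]
      calc ‖yε - ystar‖ ≤ ε * K := htle
        _ < η := hεK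
    have habs : |f yε * ξ2 - f ystar * ξ2| < δ := by
      have := hball hdist
      rwa [Real.dist_eq] at this
    have := abs_lt.mp habs
    linarith
  -- existence of a global minimum of v
  have hminv : ∃ y0, ∀ y, v y0 ≤ v y := by
    set R : ℝ := Real.sqrt d + 1 with hRdef
    have hRpos : 0 < R := by positivity
    obtain ⟨y0, hy0B, hminB⟩ := (isCompact_closedBall (0 : EuclideanSpace ℝ (Fin d)) R).exists_isMinOn
      ⟨0, Metric.mem_closedBall_self hRpos.le⟩ hK.continuous.continuousOn
    refine ⟨y0, fun y => ?_⟩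
    set z : Fin d → ℤ := fun i => ⌊y i⌋ with hzdef
    set w : EuclideanSpace ℝ (Fin d) := (WithLp.equiv 2 (Fin d → ℝ)).symm fun i => ((z i : ℝ)) with hwdef
    have hvy : v (y - w) = v y := by
      have := hvper (y - w) z
      rw [← hwdef] at this
      simpa using this.symm
    have hcoord : ∀ i, (y - w) i = Int.fract (y i) := by
      intro i
      have h1 : (y - w) i = y i - w i := rfl
      have h2 : w i = (z i : ℝ) := rfl
      rw [h1, h2]
      exact Int.self_sub_floor (y i)
    have hnorm : ‖y - w‖ ≤ Real.sqrt d := by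
      rw [EuclideanSpace.norm_eq]
      apply Real.sqrt_le_sqrt
      calc (∑ i, ‖(y - w) i‖ ^ 2) ≤ ∑ _i : Fin d, (1:ℝ) := by
            apply Finset.sum_le_sum
            intro i _
            rw [hcoord i]
            have h1 : 0 ≤ Int.fract (y i) := Int.fract_nonneg _
            have h2 : Int.fract (y i) < 1 := Int.fract_lt_one _
            rw [Real.norm_eq_abs, abs_of_nonneg h1]
            nlinarith
        _ = d := by simp
    have hmem : y - w ∈ Metric.closedBall (0 : EuclideanSpace ℝ (Fin d)) R := by
      rw [Metric.mem_closedBall, dist_zero_right]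
      linarith
    calc v y0 ≤ v (y - w) := hminB hmem
      _ = v y := hvy
  -- upper bound: lam ≤ |ξ2|
  obtain ⟨y0, hy0⟩ := hminv
  have hlocmin : IsLocalMin (fun y => v y - (fun _ => (0:ℝ)) y) y0 :=
    Filter.Eventually.of_forall fun y => by simpa using hy0 y
  have hup := hsuper (fun _ => (0:ℝ)) contDiff_const y0 hlocmin
  rw [gradient_fun_const, hH0, zero_mul, zero_add] at hup
  have hub : lam ≤ |ξ2| := by
    refine hup.trans ?_
    calc f y0 * ξ2 ≤ |f y0 * ξ2| := le_abs_self _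
      _ = |f y0| * |ξ2| := abs_mul _ _
      _ ≤ 1 * |ξ2| := by
          apply mul_le_mul_of_nonneg_right _ (abs_nonneg _)
          exact abs_le.mpr ⟨hfmin.2 y0, hfmax.2 y0⟩
      _ = |ξ2| := one_mul _
  -- lower bound: |ξ2| ≤ lam
  obtain ⟨y1, hy1⟩ := hfmax.1
  obtain ⟨y2, hy2⟩ := hfmin.1
  have h1 : ξ2 ≤ lam := by have := keyA y1; rwa [hy1, one_mul] at this
  have h2 : -ξ2 ≤ lam := by have := keyA y2; rw [hy2] at this; linarith
  have hlb : |ξ2| ≤ lam := abs_le'.mpr ⟨h1, h2⟩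
  linarith
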